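/- arXiv:2507.22444 — 3 statements merged into one kernel-verified Lean document; each statement's English description precedes it below -/
import Mathlib

section
/- Let U be a finite set and {A_f}_{f∈F_U} a family of binary observables. Define the folded family A_{true,f} := m(f·s_U(f)) A_{s_U(f)} as above. If α ⊆ {±1}^U has even cardinality, then the Fourier coefficient Â_{true,α} := E_f[χ_α(f) A_{true,f}] equals 0. -/
open Matrix

/-- The Fourier coefficient `Â_α = E_f [χ_α(f) • A_f]`. -/
noncomputable def matFourierCoeff {U : Type*} [Fintype U] [DecidableEq U] {d : ℕ}
    (A : ((U → ℤˣ) → ℤˣ) → Matrix (Fin d) (Fin d) ℂ) (α : Finset (U → ℤˣ)) :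
    Matrix (Fin d) (Fin d) ℂ :=
  (Fintype.card ((U → ℤˣ) → ℤˣ) : ℂ)⁻¹ •
    ∑ g : (U → ℤˣ) → ℤˣ, (((∏ x ∈ α, g x : ℤˣ) : ℤ) : ℂ) • A g

/-- The section function `s_U`. -/
noncomputable def sectionFun {U : Type*} (f : (U → ℤˣ) → ℤˣ) : (U → ℤˣ) → ℤˣ :=
  if f (fun _ => 1) = 1 then f else -f

/-- The majority sign `m(g)`. -/
noncomputable def majSign {U : Type*} [Fintype U] [DecidableEq U]
    (g : (U → ℤˣ) → ℤˣ) : ℤˣ :=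
  if (Finset.univ.filter (fun x : U → ℤˣ => g x = -1)).card >
      (Finset.univ.filter (fun x : U → ℤˣ => g x = 1)).card then -1 else 1

lemma sectionFun_neg {U : Type*} (f : (U → ℤˣ) → ℤˣ) :
    sectionFun (-f) = sectionFun f := by
  unfold sectionFun
  by_cases h : f (fun _ => 1) = 1
  · have h' : (-f) (fun _ => 1) ≠ 1 := by
      simp [h]
    simp [h, h']
  · have hf : f (fun _ => 1) = -1 := by
      rcases Int.units_eq_one_or (f (fun _ => 1)) with h1 | h1
      · exact absurd h1 h
      · exact h1
    have h' : (-f) (fun _ => 1) = 1 := by simp [hf]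
    simp [h, h']

lemma majSign_one {U : Type*} [Fintype U] [DecidableEq U] :
    majSign (1 : (U → ℤˣ) → ℤˣ) = 1 := by
  unfold majSign
  have : ¬ ((Finset.univ.filter (fun x : U → ℤˣ => (1 : (U → ℤˣ) → ℤˣ) x = -1)).card >
      (Finset.univ.filter (fun x : U → ℤˣ => (1 : (U → ℤˣ) → ℤˣ) x = 1)).card) := by
    simp [Pi.one_apply]
  simp [this]

lemma majSign_negone {U : Type*} [Fintype U] [DecidableEq U] :
    majSign (-1 : (U → ℤˣ) → ℤˣ) = -1 := by
  unfold majSign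
  have h1 : (Finset.univ.filter (fun x : U → ℤˣ => (-1 : (U → ℤˣ) → ℤˣ) x = -1)).card =
      Fintype.card (U → ℤˣ) := by
    simp
  have h2 : (Finset.univ.filter (fun x : U → ℤˣ => (-1 : (U → ℤˣ) → ℤˣ) x = 1)).card = 0 := by
    simp
  rw [if_pos]
  rw [h1, h2]
  exact Fintype.card_pos

lemma mul_section {U : Type*} [Fintype U] [DecidableEq U] (f : (U → ℤˣ) → ℤˣ) :
    f * sectionFun f = if f (fun _ => 1) = 1 then 1 else -1 := by
  unfold sectionFun
  by_cases h : f (fun _ => 1) = 1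
  · simp [h]
    ext x
    simp [Pi.mul_apply]
  · simp [h]
    ext x
    simp [Pi.mul_apply]

/-- if `α ⊆ {±1}^U` has even cardinality, then the Fourier coefficient of the
folded family `A_{true,f} := m(f·s_U(f)) • A_{s_U(f)}` at `α` vanishes. -/
theorem stmt_4 (U : Type*) [Fintype U] [DecidableEq U] (d : ℕ)
    (A : ((U → ℤˣ) → ℤˣ) → Matrix (Fin d) (Fin d) ℂ)
    (hherm : ∀ f, (A f)ᴴ = A f) (hinv : ∀ f, A f * A f = 1)
    (α : Finset (U → ℤˣ)) (hα : Even α.card) :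
    matFourierCoeff
      (fun f => ((majSign (f * sectionFun f) : ℤ) : ℂ) • A (sectionFun f)) α = 0 := by
  unfold matFourierCoeff
  rw [smul_eq_zero]
  right
  set T : ((U → ℤˣ) → ℤˣ) → Matrix (Fin d) (Fin d) ℂ := fun g =>
    (((∏ x ∈ α, g x : ℤˣ) : ℤ) : ℂ) •
      (((majSign (g * sectionFun g) : ℤ) : ℂ) • A (sectionFun g)) with hT
  show ∑ g, T g = 0
  have key : ∀ g : (U → ℤˣ) → ℤˣ, T g + T (-g) = 0 := by
    intro g
    have hchi : (∏ x ∈ α, (-g) x : ℤˣ) = ∏ x ∈ α, g x := by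
      have hx : ∀ x ∈ α, (-g) x = (-1) * g x := by
        intro x _; rw [Pi.neg_apply, neg_one_mul]
      rw [Finset.prod_congr rfl hx, Finset.prod_mul_distrib, Finset.prod_const,
        hα.neg_one_pow, one_mul]
    have hmaj : majSign ((-g) * sectionFun (-g)) = - majSign (g * sectionFun g) := by
      rw [sectionFun_neg, neg_mul, mul_section]
      by_cases h : g (fun _ => 1) = 1
      · have h' : (-g) (fun _ => 1) ≠ 1 := by simp [h]
        simp [h, h', majSign_one, majSign_negone]
      · have hg : g (fun _ => 1) = -1 := by
          rcases Int.units_eq_one_or (g (fun _ => 1)) with h1 | h1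
          · exact absurd h1 h
          · exact h1
        have h' : (-g) (fun _ => 1) = 1 := by simp [hg]
        simp [h, h', majSign_one, majSign_negone]
    rw [hT]
    simp only
    rw [hchi, hmaj, sectionFun_neg]
    push_cast
    rw [neg_smul, smul_neg, add_neg_cancel]
  have hne : ∀ g : (U → ℤˣ) → ℤˣ, -g ≠ g := by
    intro g hgg
    have := congrFun hgg (fun _ => 1)
    simp only [Pi.neg_apply] at this
    rcases Int.units_eq_one_or (g (fun _ => 1)) with h1 | h1 <;> rw [h1] at this <;>
      exact absurd this (by decide)
  exact Finset.sum_involution (fun g _ => -g) (fun g _ => key g)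
    (fun g _ _ => hne g) (fun g _ => Finset.mem_univ _) (fun g _ => neg_neg g)
end

section
/- Let Y₁, Y₂, Y₃, X₁, X₂, X₃ be binary observables in the d×d complex matrices (Hermitian unitaries). Then |(1/d)·Tr(Y₁Y₂Y₃ − X₁X₂X₃)| ≤ (6·(3 − Σ_{l=1}^{3} (1/d)·Tr(Y_l X_l)))^{1/2}. -/
open Matrix

lemma tr_formula (d : ℕ) (A B : Matrix (Fin d) (Fin d) ℂ) :
    (A * B).trace = ∑ i, ∑ j, A i j * B j i := by
  simp [Matrix.trace, Matrix.mul_apply, Matrix.diag]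

lemma tr_sq_re (d : ℕ) (A : Matrix (Fin d) (Fin d) ℂ) :
    (Aᴴ * A).trace.re = ∑ j, ∑ i, ‖A i j‖ ^ 2 := by
  have : (Aᴴ * A).trace = ∑ j, ∑ i, ((‖A i j‖ ^ 2 : ℝ) : ℂ) := by
    simp only [Matrix.trace, Matrix.mul_apply, Matrix.diag, Matrix.conjTranspose_apply,
      Complex.star_def, ← Complex.normSq_eq_conj_mul_self, Complex.sq_norm, Finset.sum_congr]
  rw [this]
  simp [← Complex.ofReal_pow]

lemma tr_sq_nonneg (d : ℕ) (A : Matrix (Fin d) (Fin d) ℂ) :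
    0 ≤ (Aᴴ * A).trace.re := by
  rw [tr_sq_re]; positivity

/-- Cauchy–Schwarz for traces. -/
lemma tr_cs (d : ℕ) (A B : Matrix (Fin d) (Fin d) ℂ) :
    ‖(A * B).trace‖ ≤
      Real.sqrt (Aᴴ * A).trace.re * Real.sqrt (Bᴴ * B).trace.re := by
  rw [tr_formula]
  calc ‖∑ i, ∑ j, A i j * B j i‖
      ≤ ∑ i, ∑ j, ‖A i j‖ * ‖B j i‖ := by
        refine (norm_sum_le _ _).trans (Finset.sum_le_sum fun i _ => ?_)
        exact (norm_sum_le _ _).trans (le_of_eq (by simp [_root_.map_mul]))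
    _ ≤ Real.sqrt (Aᴴ * A).trace.re * Real.sqrt (Bᴴ * B).trace.re := by
        have key := Finset.sum_mul_sq_le_sq_mul_sq (Finset.univ ×ˢ Finset.univ)
          (fun p : Fin d × Fin d => ‖A p.1 p.2‖)
          (fun p : Fin d × Fin d => ‖B p.2 p.1‖)
        rw [Finset.sum_product] at key
        have h1 : (∑ i, ∑ j, ‖A i j‖ * ‖B j i‖) ^ 2 ≤
            (∑ i, ∑ j, ‖A i j‖ ^ 2) * (∑ i, ∑ j, ‖B j i‖ ^ 2) := by
          rw [Finset.sum_product, Finset.sum_product] at key; exact key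
        have hA : (∑ i, ∑ j, ‖A i j‖ ^ 2) = (Aᴴ * A).trace.re := by
          rw [tr_sq_re, Finset.sum_comm]
        have hB : (∑ i, ∑ j, ‖B j i‖ ^ 2) = (Bᴴ * B).trace.re := by
          rw [tr_sq_re]
        rw [hA, hB] at h1
        have hn : 0 ≤ ∑ i, ∑ j, ‖A i j‖ * ‖B j i‖ := by positivity
        have h2 := Real.sqrt_le_sqrt h1
        rwa [Real.sqrt_sq hn, Real.sqrt_mul (tr_sq_nonneg d A)] at h2

lemma herm_mul_unit {d : ℕ} {P Q : Matrix (Fin d) (Fin d) ℂ}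
    (hP1 : Pᴴ = P) (hP2 : P * P = 1) (hQ1 : Qᴴ = Q) (hQ2 : Q * Q = 1) :
    ((P * Q)ᴴ * (P * Q)).trace.re = d := by
  have h : (P * Q)ᴴ * (P * Q) = 1 := by
    rw [conjTranspose_mul, hP1, hQ1, mul_assoc, ← mul_assoc P, hP2, one_mul, hQ2]
  rw [h, Matrix.trace_one]
  simp

lemma herm_diff {d : ℕ} {Y X : Matrix (Fin d) (Fin d) ℂ}
    (hY1 : Yᴴ = Y) (hY2 : Y * Y = 1) (hX1 : Xᴴ = X) (hX2 : X * X = 1) :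
    ((Y - X)ᴴ * (Y - X)).trace.re = 2 * d - 2 * ((Y * X).trace).re := by
  have hc : (Y - X)ᴴ = Y - X := by rw [conjTranspose_sub, hY1, hX1]
  have e : (Y - X) * (Y - X) = Y * Y + X * X - Y * X - X * Y := by noncomm_ring
  rw [hc, e, hY2, hX2]
  rw [Matrix.trace_sub, Matrix.trace_sub, Matrix.trace_add, Matrix.trace_one,
    Matrix.trace_mul_comm X Y]
  simp
  ring

/-- for binary observables `Y₁,Y₂,Y₃,X₁,X₂,X₃ ∈ M_d(ℂ)`,
`|(1/d)·Tr(Y₁Y₂Y₃ − X₁X₂X₃)| ≤ (6 (3 − Σ_l (1/d)·Tr(Y_l X_l)))^{1/2}`. -/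
theorem stmt_6 (d : ℕ) (Y X : Fin 3 → Matrix (Fin d) (Fin d) ℂ)
    (hY : ∀ l, (Y l)ᴴ = Y l ∧ Y l * Y l = 1)
    (hX : ∀ l, (X l)ᴴ = X l ∧ X l * X l = 1) :
    ‖(1 / (d : ℂ)) * (Y 0 * Y 1 * Y 2 - X 0 * X 1 * X 2).trace‖ ≤
      Real.sqrt (6 * (3 - ∑ l, ((1 / (d : ℂ)) * (Y l * X l).trace).re)) := by
  rcases Nat.eq_zero_or_pos d with hd | hd
  · subst hd
    simp [Matrix.trace]
  set D : ℝ := (d : ℝ) with hDdef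
  have hD : (0 : ℝ) < D := by rw [hDdef]; exact_mod_cast hd
  set r : Fin 3 → ℝ := fun l => ((Y l * X l).trace).re with hrdef
  -- nonnegativity of 2D - 2 r l
  have hnn : ∀ l, 0 ≤ 2 * D - 2 * r l := by
    intro l
    have := tr_sq_nonneg d (Y l - X l)
    rwa [herm_diff (hY l).1 (hY l).2 (hX l).1 (hX l).2] at this
  -- per-term Cauchy-Schwarz bounds
  have bd : ∀ (l : Fin 3) (B : Matrix (Fin d) (Fin d) ℂ),
      (Bᴴ * B).trace.re = d →
      ‖((Y l - X l) * B).trace‖ ≤ Real.sqrt (2 * D - 2 * r l) * Real.sqrt D := by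
    intro l B hB
    have := tr_cs d (Y l - X l) B
    rwa [herm_diff (hY l).1 (hY l).2 (hX l).1 (hX l).2, hB] at this
  have b0 := bd 0 (Y 1 * Y 2) (herm_mul_unit (hY 1).1 (hY 1).2 (hY 2).1 (hY 2).2)
  have b1 := bd 1 (Y 2 * X 0) (herm_mul_unit (hY 2).1 (hY 2).2 (hX 0).1 (hX 0).2)
  have b2 := bd 2 (X 0 * X 1) (herm_mul_unit (hX 0).1 (hX 0).2 (hX 1).1 (hX 1).2)
  -- trace decomposition
  have hsplit : (Y 0 * Y 1 * Y 2 - X 0 * X 1 * X 2).trace =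
      ((Y 0 - X 0) * (Y 1 * Y 2)).trace + ((Y 1 - X 1) * (Y 2 * X 0)).trace +
      ((Y 2 - X 2) * (X 0 * X 1)).trace := by
    have e : Y 0 * Y 1 * Y 2 - X 0 * X 1 * X 2 =
        (Y 0 - X 0) * (Y 1 * Y 2) + X 0 * ((Y 1 - X 1) * Y 2) + (X 0 * X 1) * (Y 2 - X 2) := by
      noncomm_ring
    have hm : ((Y 1 - X 1) * (Y 2 * X 0)).trace = (X 0 * ((Y 1 - X 1) * Y 2)).trace := by
      rw [← mul_assoc, Matrix.trace_mul_comm]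
    have hr3 : ((Y 2 - X 2) * (X 0 * X 1)).trace = ((X 0 * X 1) * (Y 2 - X 2)).trace :=
      Matrix.trace_mul_comm _ _
    rw [e, Matrix.trace_add, Matrix.trace_add, hm, hr3]
  -- bound the LHS by sum of three sqrt terms
  have habs : ‖(1 / (d : ℂ)) * (Y 0 * Y 1 * Y 2 - X 0 * X 1 * X 2).trace‖ ≤
      (1 / D) * (Real.sqrt (2 * D - 2 * r 0) * Real.sqrt D
        + Real.sqrt (2 * D - 2 * r 1) * Real.sqrt D
        + Real.sqrt (2 * D - 2 * r 2) * Real.sqrt D) := by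
    rw [norm_mul]
    have h1 : ‖1 / (d : ℂ)‖ = 1 / D := by
      simp [hDdef, map_div₀]
    rw [h1]
    refine mul_le_mul_of_nonneg_left ?_ (by positivity)
    rw [hsplit]
    calc ‖((Y 0 - X 0) * (Y 1 * Y 2)).trace + ((Y 1 - X 1) * (Y 2 * X 0)).trace +
          ((Y 2 - X 2) * (X 0 * X 1)).trace‖
        ≤ ‖((Y 0 - X 0) * (Y 1 * Y 2)).trace‖
          + ‖((Y 1 - X 1) * (Y 2 * X 0)).trace‖
          + ‖((Y 2 - X 2) * (X 0 * X 1)).trace‖ :=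
        (norm_add_le _ _).trans (by gcongr; exact norm_add_le _ _)
      _ ≤ _ := by gcongr
  -- simplify (1/D)·(√(2D-2r)·√D) = √(2 - 2 r/D)
  have per : ∀ x : ℝ, 0 ≤ 2 * D - 2 * x →
      (1 / D) * (Real.sqrt (2 * D - 2 * x) * Real.sqrt D) = Real.sqrt (2 - 2 * x / D) := by
    intro x hx
    have e1 : 2 - 2 * x / D = ((2 * D - 2 * x) * D) / D ^ 2 := by
      field_simp
    rw [e1, Real.sqrt_div (by positivity), Real.sqrt_sq hD.le, ← Real.sqrt_mul hx]
    ring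
  -- rewrite RHS's sum
  have hre : ∀ l, ((1 / (d : ℂ)) * (Y l * X l).trace).re = (1 / D) * r l := by
    intro l
    have : (1 / (d : ℂ)) = (((1 / D : ℝ)) : ℂ) := by rw [hDdef]; push_cast; ring
    rw [this, Complex.re_ofReal_mul]
  -- final numeric inequality
  set a : Fin 3 → ℝ := fun l => Real.sqrt (2 - 2 * r l / D) with hadef
  have ha2 : ∀ l, (a l) ^ 2 = 2 - 2 * r l / D := by
    intro l
    refine Real.sq_sqrt ?_
    have := hnn l
    have h2 : 0 ≤ (2 * D - 2 * r l) / D := div_nonneg this hD.le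
    have e : (2 * D - 2 * r l) / D = 2 - 2 * r l / D := by field_simp
    linarith [e ▸ h2]
  have han : ∀ l, 0 ≤ a l := fun l => Real.sqrt_nonneg _
  have key : a 0 + a 1 + a 2 ≤ Real.sqrt (6 * (3 - ((1/D) * r 0 + (1/D) * r 1 + (1/D) * r 2))) := by
    have hsq : (a 0 + a 1 + a 2) ^ 2 ≤ 6 * (3 - ((1/D) * r 0 + (1/D) * r 1 + (1/D) * r 2)) := by
      have h0 := ha2 0; have h1 := ha2 1; have h2 := ha2 2
      have e : ∀ l : Fin 3, (1/D) * r l = 2 * r l / D / 2 := by intro l; field_simp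
      nlinarith [han 0, han 1, han 2, sq_nonneg (a 0 - a 1), sq_nonneg (a 0 - a 2),
        sq_nonneg (a 1 - a 2), e 0, e 1, e 2]
    have := Real.sqrt_le_sqrt hsq
    rwa [Real.sqrt_sq (by positivity)] at this
  calc ‖(1 / (d : ℂ)) * (Y 0 * Y 1 * Y 2 - X 0 * X 1 * X 2).trace‖
      ≤ (1 / D) * (Real.sqrt (2 * D - 2 * r 0) * Real.sqrt D
        + Real.sqrt (2 * D - 2 * r 1) * Real.sqrt D
        + Real.sqrt (2 * D - 2 * r 2) * Real.sqrt D) := habs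
    _ = a 0 + a 1 + a 2 := by
        rw [mul_add, mul_add, per _ (hnn 0), per _ (hnn 1), per _ (hnn 2)]
    _ ≤ _ := by
        rw [Fin.sum_univ_three, hre 0, hre 1, hre 2]
        exact key
end

section
/- Let G be a synchronous nonlocal game admitting a perfect oracularizable synchronous strategy, i.e., a synchronous PVM strategy {A^x_a} on the maximally entangled state with winning probability 1 such that A^x_a and A^y_b commute for all (x,y) in the support of the question distribution. Then the projection game G^proj also admits a perfect synchronous strategy, given by Alice measuring with A^{xy}_{ab} := A^x_a A^y_b on pair questions and Bob measuring with A^x_a on single questions. -/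
open Matrix

/-- A (two-player, one-round) nonlocal game. -/
structure NonlocalGame (IA IB OA OB : Type) where
  prob : IA → IB → ℝ
  D : IA → IB → OA → OB → Bool

/-- `p` is a probability distribution on question pairs. -/
def IsDist {IA IB : Type} [Fintype IA] [Fintype IB] (p : IA → IB → ℝ) : Prop :=
  (∀ x y, 0 ≤ p x y) ∧ ∑ x, ∑ y, p x y = 1

/-- A PVM: orthogonal projections summing to the identity. -/
def IsPVM {d : ℕ} {O : Type} [Fintype O] (A : O → Matrix (Fin d) (Fin d) ℂ) : Prop :=
  (∀ a, (A a)ᴴ = A a ∧ A a * A a = A a) ∧ ∑ a, A a = 1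

/-- The winning probability of the synchronous strategy on `ℂ^d` with correlations
`p(a,b|x,y) = (1/d)Tr(A^x_a B^y_b)` (maximally entangled state, Bob's PVMs being the
transposes of `B`). -/
noncomputable def syncWinProb {IA IB OA OB : Type}
    [Fintype IA] [Fintype IB] [Fintype OA] [Fintype OB]
    (G : NonlocalGame IA IB OA OB) (d : ℕ)
    (A : IA → OA → Matrix (Fin d) (Fin d) ℂ)
    (B : IB → OB → Matrix (Fin d) (Fin d) ℂ) : ℝ :=
  ∑ x, ∑ y, G.prob x y *
    ∑ a, ∑ b, if G.D x y a b then (A x a * B y b).trace.re / d else 0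

/-- The projection game `G^proj`. -/
noncomputable def projGame {I O : Type} [DecidableEq I] [DecidableEq O]
    (G : NonlocalGame I I O O) : NonlocalGame (I × I) (I × Bool) (O × O) O where
  prob := fun q z =>
    if z.1 = (if z.2 then q.2 else q.1) then G.prob q.1 q.2 / 2 else 0
  D := fun q z a c =>
    G.D q.1 q.2 a.1 a.2 && decide (z.1 = if z.2 then q.2 else q.1) &&
      decide (c = if z.2 then a.2 else a.1)

/-- if a synchronous game `G` admits a perfect oracularizable synchronous
strategy `{A^x_a}`, then `G^proj` admits a perfect synchronous strategy, given by Alice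
measuring with `A^{xy}_{ab} := A^x_a A^y_b` on pair questions and Bob measuring with
`A^x_a` on single questions. -/
theorem stmt_14 {I O : Type} [Fintype I] [DecidableEq I] [Fintype O] [DecidableEq O]
    (G : NonlocalGame I I O O) (hdist : IsDist G.prob)
    (hsymm : ∀ x y, G.prob x y = G.prob y x)
    (hsync : ∀ x (a b : O), a ≠ b → G.D x x a b = false)
    (d : ℕ) (hd : 0 < d) (A : I → O → Matrix (Fin d) (Fin d) ℂ)
    (hPVM : ∀ x, IsPVM (A x))
    (hcomm : ∀ x y, 0 < G.prob x y → ∀ a b, A x a * A y b = A y b * A x a)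
    (hperf : syncWinProb G d A A = 1) :
    (∀ x y, 0 < G.prob x y → IsPVM (fun ab : O × O => A x ab.1 * A y ab.2)) ∧
      syncWinProb (projGame G) d
        (fun q ab => A q.1 ab.1 * A q.2 ab.2) (fun z c => A z.1 c) = 1 := by

  obtain ⟨hpos, hsum⟩ := hdist
  have hPVMprod : ∀ x y, 0 < G.prob x y → IsPVM (fun ab : O × O => A x ab.1 * A y ab.2) := by
    intro x y hp
    obtain ⟨hA1, hA2⟩ := hPVM x
    obtain ⟨hB1, hB2⟩ := hPVM y
    refine ⟨fun ab => ⟨?_, ?_⟩, ?_⟩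
    · rw [conjTranspose_mul, (hA1 ab.1).1, (hB1 ab.2).1, ← hcomm x y hp]
    · have h := hcomm x y hp ab.1 ab.2
      calc A x ab.1 * A y ab.2 * (A x ab.1 * A y ab.2)
          = A x ab.1 * (A y ab.2 * A x ab.1) * A y ab.2 := by
            simp only [mul_assoc]
        _ = A x ab.1 * (A x ab.1 * A y ab.2) * A y ab.2 := by rw [← h]
        _ = (A x ab.1 * A x ab.1) * (A y ab.2 * A y ab.2) := by
            simp only [mul_assoc]
        _ = A x ab.1 * A y ab.2 := by rw [(hA1 ab.1).2, (hB1 ab.2).2]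
    · calc (∑ ab : O × O, A x ab.1 * A y ab.2)
          = (∑ a, A x a) * (∑ b, A y b) := by
            rw [Finset.sum_mul_sum, Fintype.sum_prod_type]
        _ = 1 := by rw [hA2, hB2, one_mul]
  refine ⟨hPVMprod, ?_⟩
  have key : ∀ x y,
      (∑ z : I × Bool, (projGame G).prob (x, y) z *
        ∑ ab : O × O, ∑ c, if (projGame G).D (x, y) z ab c then
          ((A x ab.1 * A y ab.2) * A z.1 c).trace.re / d else 0) =
      G.prob x y * ∑ a, ∑ b, if G.D x y a b then (A x a * A y b).trace.re / d else 0 := by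
    intro x y
    by_cases hp : 0 < G.prob x y
    · have htr1 : ∀ a b, A x a * A y b * A x a = A x a * A y b := by
        intro a b
        rw [mul_assoc, ← hcomm x y hp a b, ← mul_assoc, (hPVM x).1 a |>.2]
      have htr2 : ∀ a b, A x a * A y b * A y b = A x a * A y b := by
        intro a b
        rw [mul_assoc, (hPVM y).1 b |>.2]
      rw [Fintype.sum_prod_type]
      simp only [projGame, Fintype.sum_bool]
      simp only [Bool.false_eq_true, Bool.true_eq_false, if_true, if_false, ite_true,
        ite_false, Bool.and_eq_true, decide_eq_true_eq, ite_and, ite_mul, zero_mul]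
      rw [Finset.sum_add_distrib, Finset.sum_ite_eq' Finset.univ y, Finset.sum_ite_eq' Finset.univ x]
      simp only [Finset.mem_univ, if_true]
      have inner1 : (∑ ab : O × O, ∑ c, if G.D x y ab.1 ab.2 = true then
          if c = ab.1 then
            (A x ab.1 * A y ab.2 * A x c).trace.re / d else 0 else 0) =
          ∑ a, ∑ b, if G.D x y a b then (A x a * A y b).trace.re / d else 0 := by
        rw [Fintype.sum_prod_type]
        refine Finset.sum_congr rfl fun a _ => Finset.sum_congr rfl fun b _ => ?_
        by_cases hD : G.D x y a b <;> simp [hD, htr1]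
      have inner2 : (∑ ab : O × O, ∑ c, if G.D x y ab.1 ab.2 = true then
          if c = ab.2 then
            (A x ab.1 * A y ab.2 * A y c).trace.re / d else 0 else 0) =
          ∑ a, ∑ b, if G.D x y a b then (A x a * A y b).trace.re / d else 0 := by
        rw [Fintype.sum_prod_type]
        refine Finset.sum_congr rfl fun a _ => Finset.sum_congr rfl fun b _ => ?_
        by_cases hD : G.D x y a b <;> simp [hD, htr2]
      rw [inner1, inner2]
      ring
    · have h0 : G.prob x y = 0 := le_antisymm (not_lt.1 hp) (hpos x y)
      simp [projGame, h0]
  unfold syncWinProb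
  rw [Fintype.sum_prod_type]
  calc (∑ x, ∑ y, ∑ z : I × Bool, (projGame G).prob (x, y) z *
        ∑ ab : O × O, ∑ c, if (projGame G).D (x, y) z ab c then
          ((A x ab.1 * A y ab.2) * A z.1 c).trace.re / d else 0)
      = ∑ x, ∑ y, G.prob x y *
        ∑ a, ∑ b, if G.D x y a b then (A x a * A y b).trace.re / d else 0 := by
        exact Finset.sum_congr rfl fun x _ => Finset.sum_congr rfl fun y _ => key x y
    _ = 1 := hperf
end
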